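/- Let $M \succ 0$ and $x \in \mathbb{R}^n$, set $\hat{g} = -\operatorname{Trace}(M^{-1})$, $\omega = x^T M^{-1} x$, $\alpha = x^T M^{-2} x$, and for $\lambda > -1$ with $1+\lambda\omega>0$ define $F(\lambda) = (1+\lambda)\hat{g} + \frac{\lambda(1+\lambda)}{1+\lambda\omega}\alpha$. Then $F(\lambda) = -\operatorname{Trace}(M_+^{-1})$ where $M_+ = \frac{1}{1+\lambda}(M + \lambda xx^T)$, and $F'(\lambda) = \hat{g} + \frac{\lambda^2\omega + 2\lambda + 1}{(1+\lambda\omega)^2}\alpha$. -/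

import Mathlib

open Matrix

lemma aux1 {n : ℕ} (x : Fin n → ℝ) (A : Matrix (Fin n) (Fin n) ℝ) :
    vecMulVec x x * A * vecMulVec x x = (x ⬝ᵥ A *ᵥ x) • vecMulVec x x := by
  ext i j
  simp [mul_apply, vecMulVec_apply, dotProduct, mulVec, Finset.sum_mul, Finset.mul_sum]
  rw [Finset.sum_comm]
  congr 1; ext k; congr 1; ext l; ring

lemma aux2 {n : ℕ} (x : Fin n → ℝ) (A : Matrix (Fin n) (Fin n) ℝ) :
    (A * vecMulVec x x * A).trace = x ⬝ᵥ (A * A) *ᵥ x := by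
  simp [trace, diag, mul_apply, vecMulVec_apply, dotProduct, mulVec, Finset.sum_mul,
    Finset.mul_sum]
  rw [Finset.sum_comm]
  congr 1; ext k
  rw [Finset.sum_comm]
  congr 1; ext l; congr 1; ext m; ring

/-- along the line search, with `ĝ = -Trace(M⁻¹)`, `ω = xᵀM⁻¹x`,
`α = xᵀM⁻²x` and `F(λ) = (1+λ)ĝ + λ(1+λ)α/(1+λω)`, one has
`F(λ) = -Trace(M₊⁻¹)` where `M₊ = (M + λxxᵀ)/(1+λ)`, and
`F'(λ) = ĝ + (λ²ω + 2λ + 1)α/(1+λω)²`. -/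
theorem stmt10 {n : ℕ} (M : Matrix (Fin n) (Fin n) ℝ) (hM : M.PosDef)
    (x : Fin n → ℝ) (g w a : ℝ)
    (hg : g = -(M⁻¹).trace) (hw : w = x ⬝ᵥ M⁻¹ *ᵥ x)
    (ha : a = x ⬝ᵥ (M⁻¹ * M⁻¹) *ᵥ x)
    (F : ℝ → ℝ) (hF : F = fun lam => (1 + lam) * g + lam * (1 + lam) / (1 + lam * w) * a)
    (lam : ℝ) (h1 : -1 < lam) (h2 : 0 < 1 + lam * w)
    (Mp : Matrix (Fin n) (Fin n) ℝ)
    (hMp : Mp = (1 + lam)⁻¹ • (M + lam • vecMulVec x x)) :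
    F lam = -(Mp⁻¹).trace ∧
      HasDerivAt F (g + (lam ^ 2 * w + 2 * lam + 1) / (1 + lam * w) ^ 2 * a) lam := by
  have hlam : (1 : ℝ) + lam ≠ 0 := by linarith
  have hden : (1 : ℝ) + lam * w ≠ 0 := ne_of_gt h2
  set A := M⁻¹ with hA
  set V := vecMulVec x x with hV
  have hMA : M * A = 1 := Matrix.mul_nonsing_inv M hM.det_pos.ne'.isUnit
  set c : ℝ := lam / (1 + lam * w) with hc
  set N : Matrix (Fin n) (Fin n) ℝ := (1 + lam) • (A - c • (A * V * A)) with hN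
  have e1 : M * (A * V * A) = V * A := by
    rw [← Matrix.mul_assoc, ← Matrix.mul_assoc, hMA, Matrix.one_mul]
  have e2 : V * (A * V * A) = w • (V * A) := by
    calc V * (A * V * A) = (V * A * V) * A := by
            rw [Matrix.mul_assoc, Matrix.mul_assoc, Matrix.mul_assoc]
      _ = ((x ⬝ᵥ A *ᵥ x) • V) * A := by rw [hV, aux1]
      _ = w • (V * A) := by rw [Matrix.smul_mul, ← hw]
  have key : Mp * N = 1 := by
    rw [hMp, hN, Matrix.smul_mul, Matrix.mul_smul, smul_smul, inv_mul_cancel₀ hlam, one_smul]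
    simp only [Matrix.add_mul, Matrix.mul_sub, Matrix.mul_smul, Matrix.smul_mul, smul_smul,
      e1, e2, hMA]
    match_scalars
    · ring
    · rw [hc]
      field_simp
      ring
  have hMpinv : Mp⁻¹ = N := Matrix.inv_eq_right_inv key
  constructor
  · rw [hMpinv, hN]
    have htr : ((1 + lam) • (A - c • (A * V * A))).trace
        = (1 + lam) * (A.trace - c * a) := by
      rw [Matrix.trace_smul, Matrix.trace_sub, Matrix.trace_smul, hV, aux2, ← ha,
        smul_eq_mul, smul_eq_mul]
    rw [htr, hF]
    simp only
    have hAg : A.trace = -g := by rw [hg]; ring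
    rw [hAg, hc]
    field_simp
    ring
  · rw [hF]
    have d1 : HasDerivAt (fun l : ℝ => (1 + l) * g) g lam := by
      simpa using ((hasDerivAt_id lam).const_add 1).mul_const g
    have d2 : HasDerivAt (fun l : ℝ => l * (1 + l)) (1 * (1 + lam) + lam * 1) lam :=
      (hasDerivAt_id lam).mul ((hasDerivAt_id lam).const_add 1)
    have d3 : HasDerivAt (fun l : ℝ => 1 + l * w) w lam := by
      simpa using ((hasDerivAt_id lam).mul_const w).const_add 1
    have d4 := (d2.div d3 hden).mul_const a
    have hsum := d1.add d4
    have hval : g + ((1 * (1 + lam) + lam * 1) * (1 + lam * w) - lam * (1 + lam) * w) /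
          (1 + lam * w) ^ 2 * a
        = g + (lam ^ 2 * w + 2 * lam + 1) / (1 + lam * w) ^ 2 * a := by
      ring
    exact hval ▸ hsum
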